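/- Let n, d be positive integers with gcd(n,d) = 1, let r be an integer with n + d - nd ≤ r ≤ n and n ≡ r (mod d), and let k ∈ {1, ..., (n-r)/d}. Then modulo Φ_n(q): (q^d;q^d)_{(n-r)/d - k + 1} ≡ (-1)^{k-1} q^{(k-1)(dk+2r-2d)/2} (q^d;q^d)_{(n-r)/d} / (q^r;q^d)_{k-1}. -/

import Mathlib

open Finset Polynomial

/-- The indeterminate `q`, as a rational function over `ℚ`. -/
noncomputable def q : RatFunc ℚ := RatFunc.X

/-- The q-shifted factorial `(q^r; q^d)_m = ∏_{j=0}^{m-1} (1 - q^{r+dj})`. -/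
noncomputable def qPoch (r d : ℤ) (m : ℕ) : RatFunc ℚ :=
  ∏ j ∈ Finset.range m, (1 - q ^ (r + d * (j : ℤ)))

/-- The q-integer `[m] = (1-q^m)/(1-q)`. -/
noncomputable def qint (m : ℤ) : RatFunc ℚ := (1 - q ^ m) / (1 - q)

/-- Congruence of rational functions modulo a polynomial `P`: the difference can be
written with numerator divisible by `P` and denominator coprime to `P`. -/
def modCong (A B : RatFunc ℚ) (P : Polynomial ℚ) : Prop :=
  ∃ c e : Polynomial ℚ, IsCoprime e P ∧
    A - B = algebraMap (Polynomial ℚ) (RatFunc ℚ) (P * c) /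
            algebraMap (Polynomial ℚ) (RatFunc ℚ) e

/-- The q-integer `[n]` as a polynomial: `1 + q + ⋯ + q^{n-1}`. -/
noncomputable def qintPoly (n : ℕ) : Polynomial ℚ := ∑ i ∈ Finset.range n, Polynomial.X ^ i

namespace St18

noncomputable abbrev ι : Polynomial ℚ →+* RatFunc ℚ := algebraMap (Polynomial ℚ) (RatFunc ℚ)

lemma ι_inj : Function.Injective ι := IsFractionRing.injective _ _

lemma ι_ne_zero {f : Polynomial ℚ} (hf : f ≠ 0) : ι f ≠ 0 :=
  (map_ne_zero_iff ι ι_inj).mpr hf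

lemma qne : q ≠ 0 := RatFunc.X_ne_zero

lemma hqX : ι Polynomial.X = q := RatFunc.algebraMap_X

lemma zpow_rep (z : ℤ) : q ^ z = ι (Polynomial.X ^ z.toNat) / ι (Polynomial.X ^ (-z).toNat) := by
  have hz : z = (z.toNat : ℤ) - ((-z).toNat : ℤ) := by omega
  rw [map_pow, map_pow, hqX]
  conv_lhs => rw [hz]
  rw [zpow_sub₀ qne, zpow_natCast, zpow_natCast]

/-- `A` is a ratio with denominator coprime to `P`. -/
def Good (P : Polynomial ℚ) (A : RatFunc ℚ) : Prop :=
  ∃ f g : Polynomial ℚ, IsCoprime g P ∧ A = ι f / ι g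

/-- `A` is a ratio with numerator and denominator coprime to `P`. -/
def UGood (P : Polynomial ℚ) (A : RatFunc ℚ) : Prop :=
  ∃ f g : Polynomial ℚ, IsCoprime f P ∧ IsCoprime g P ∧ A = ι f / ι g

variable {P : Polynomial ℚ}

lemma cop_ne_zero (hP : Prime P) {g : Polynomial ℚ} (hg : IsCoprime g P) : g ≠ 0 := by
  rintro rfl
  exact hP.not_unit (isCoprime_zero_left.mp hg)

lemma UGood.good {A : RatFunc ℚ} (h : UGood P A) : Good P A := by
  obtain ⟨f, g, _, hg, hrep⟩ := h; exact ⟨f, g, hg, hrep⟩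

lemma Good.one : Good P 1 := ⟨1, 1, isCoprime_one_left, by simp⟩

lemma Good.iota (f : Polynomial ℚ) : Good P (ι f) := ⟨f, 1, isCoprime_one_left, by simp⟩

lemma Good.mul {A B : RatFunc ℚ} (hA : Good P A) (hB : Good P B) : Good P (A * B) := by
  obtain ⟨f, g, hg, rfl⟩ := hA
  obtain ⟨f', g', hg', rfl⟩ := hB
  exact ⟨f * f', g * g', hg.mul_left hg', by rw [div_mul_div_comm, map_mul, map_mul]⟩

lemma Good.neg {A : RatFunc ℚ} (hA : Good P A) : Good P (-A) := by
  obtain ⟨f, g, hg, rfl⟩ := hA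
  exact ⟨-f, g, hg, by rw [map_neg, neg_div]⟩

lemma Good.sub (hP : Prime P) {A B : RatFunc ℚ} (hA : Good P A) (hB : Good P B) :
    Good P (A - B) := by
  obtain ⟨f, g, hg, rfl⟩ := hA
  obtain ⟨f', g', hg', rfl⟩ := hB
  refine ⟨f * g' - g * f', g * g', hg.mul_left hg', ?_⟩
  rw [div_sub_div _ _ (ι_ne_zero (cop_ne_zero hP hg)) (ι_ne_zero (cop_ne_zero hP hg')),
    map_mul, map_sub, map_mul, map_mul]

lemma Good.pow {A : RatFunc ℚ} (hA : Good P A) (t : ℕ) : Good P (A ^ t) := by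
  obtain ⟨f, g, hg, rfl⟩ := hA
  exact ⟨f ^ t, g ^ t, hg.pow_left, by rw [div_pow, map_pow, map_pow]⟩

lemma Good.zpow (hX : IsCoprime (Polynomial.X : Polynomial ℚ) P) (z : ℤ) : Good P (q ^ z) :=
  ⟨Polynomial.X ^ z.toNat, Polynomial.X ^ (-z).toNat, hX.pow_left, zpow_rep z⟩

lemma Good.prod (f : ℕ → RatFunc ℚ) (t : ℕ) (h : ∀ i ∈ Finset.range t, Good P (f i)) :
    Good P (∏ i ∈ Finset.range t, f i) := by
  induction t with
  | zero => simpa using Good.one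
  | succ t ih =>
    rw [Finset.prod_range_succ]
    exact (ih fun i hi => h i (by simp at hi ⊢; omega)).mul (h t (by simp))

lemma UGood.mul {A B : RatFunc ℚ} (hA : UGood P A) (hB : UGood P B) : UGood P (A * B) := by
  obtain ⟨f, g, hf, hg, rfl⟩ := hA
  obtain ⟨f', g', hf', hg', rfl⟩ := hB
  exact ⟨f * f', g * g', hf.mul_left hf', hg.mul_left hg',
    by rw [div_mul_div_comm, map_mul, map_mul]⟩

lemma UGood.one : UGood P 1 := ⟨1, 1, isCoprime_one_left, isCoprime_one_left, by simp⟩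

lemma UGood.prod (f : ℕ → RatFunc ℚ) (t : ℕ) (h : ∀ i ∈ Finset.range t, UGood P (f i)) :
    UGood P (∏ i ∈ Finset.range t, f i) := by
  induction t with
  | zero => simpa using UGood.one
  | succ t ih =>
    rw [Finset.prod_range_succ]
    exact (ih fun i hi => h i (by simp at hi ⊢; omega)).mul (h t (by simp))

lemma modCong_of_eq {A B : RatFunc ℚ} (h : A = B) : modCong A B P :=
  ⟨0, 1, isCoprime_one_left, by simp [h]⟩

lemma modCong_symm {A B : RatFunc ℚ} (h : modCong A B P) : modCong B A P := by
  obtain ⟨c, e, he, hd⟩ := h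
  refine ⟨-c, e, he, ?_⟩
  rw [mul_neg, map_neg, neg_div, ← hd, neg_sub]

lemma modCong_trans (hP : Prime P) {A B C : RatFunc ℚ}
    (h1 : modCong A B P) (h2 : modCong B C P) : modCong A C P := by
  obtain ⟨c, e, he, hd⟩ := h1
  obtain ⟨c', e', he', hd'⟩ := h2
  refine ⟨c * e' + c' * e, e * e', he.mul_left he', ?_⟩
  have h3 : A - C = (A - B) + (B - C) := by ring
  rw [h3, hd, hd', div_add_div _ _ (ι_ne_zero (cop_ne_zero hP he))
    (ι_ne_zero (cop_ne_zero hP he')), ← map_mul, ← map_mul, ← map_add, ← map_mul]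
  ring_nf

lemma modCong_mul_good {A B C : RatFunc ℚ} (hC : Good P C) (h : modCong A B P) :
    modCong (C * A) (C * B) P := by
  obtain ⟨f, g, hg, rfl⟩ := hC
  obtain ⟨c, e, he, hd⟩ := h
  refine ⟨f * c, g * e, hg.mul_left he, ?_⟩
  rw [← mul_sub, hd, div_mul_div_comm, ← map_mul, ← map_mul]
  ring_nf

lemma modCong_mul (hP : Prime P) {A B A' B' : RatFunc ℚ}
    (hA : Good P A) (hB' : Good P B')
    (h1 : modCong A B P) (h2 : modCong A' B' P) : modCong (A * A') (B * B') P := by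
  have t1 : modCong (A * A') (A * B') P := modCong_mul_good hA h2
  have t2 : modCong (A * B') (B * B') P := by
    have h3 := modCong_mul_good hB' h1
    exact modCong_trans hP (modCong_of_eq (mul_comm A B'))
      (modCong_trans hP h3 (modCong_of_eq (mul_comm B' B)))
  exact modCong_trans hP t1 t2

lemma modCong_prod (hP : Prime P) (f g : ℕ → RatFunc ℚ) (t : ℕ)
    (hf : ∀ i ∈ Finset.range t, Good P (f i)) (hg : ∀ i ∈ Finset.range t, Good P (g i))
    (h : ∀ i ∈ Finset.range t, modCong (f i) (g i) P) :
    modCong (∏ i ∈ Finset.range t, f i) (∏ i ∈ Finset.range t, g i) P := by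
  induction t with
  | zero => exact modCong_of_eq (by simp)
  | succ t ih =>
    rw [Finset.prod_range_succ, Finset.prod_range_succ]
    have hmem : ∀ i ∈ Finset.range t, i ∈ Finset.range (t + 1) := by
      intro i hi; simp at hi ⊢; omega
    exact modCong_mul hP (Good.prod f t fun i hi => hf i (hmem i hi))
      (hg t (by simp))
      (ih (fun i hi => hf i (hmem i hi)) (fun i hi => hg i (hmem i hi))
        (fun i hi => h i (hmem i hi)))
      (h t (by simp))

lemma modCong_cancel (hP : Prime P) {D A B : RatFunc ℚ} (f g : Polynomial ℚ)
    (hf : IsCoprime f P) (hg : IsCoprime g P) (hD : D = ι f / ι g)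
    (h : modCong (D * A) (D * B) P) : modCong A B P := by
  obtain ⟨c, e, he, hd⟩ := h
  have hfne := ι_ne_zero (cop_ne_zero hP hf)
  have hgne := ι_ne_zero (cop_ne_zero hP hg)
  have hDne : D ≠ 0 := hD ▸ div_ne_zero hfne hgne
  refine ⟨c * g, e * f, he.mul_left hf, ?_⟩
  have h0 : D * (A - B) = ι (P * c) / ι e := by rw [mul_sub]; exact hd
  have hene := ι_ne_zero (cop_ne_zero hP he)
  have h1 : A - B = (ι (P * c) / ι e) / D := by
    rw [← h0, mul_div_cancel_left₀ _ hDne]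
  have h2 : ι (P * c) / ι e / (ι f / ι g) = ι (P * (c * g)) / ι (e * f) := by
    rw [map_mul, map_mul, map_mul]
    field_simp
    simp only [map_mul]
    ring
  rw [h1, hD, h2]

lemma cyclo_not_dvd {n : ℕ} (hn : 0 < n) {b : ℕ} (hb : ¬ n ∣ b) :
    ¬ (cyclotomic n ℚ ∣ (Polynomial.X ^ b - 1)) := by
  intro hdvd
  have hmap := Polynomial.map_dvd (algebraMap ℚ ℂ) hdvd
  rw [Polynomial.map_sub, Polynomial.map_pow, Polynomial.map_X, Polynomial.map_one,
    map_cyclotomic] at hmap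
  have hζ : IsPrimitiveRoot (Complex.exp (2 * Real.pi * Complex.I / n)) n :=
    Complex.isPrimitiveRoot_exp n hn.ne'
  have hroot : (cyclotomic n ℂ).IsRoot _ := hζ.isRoot_cyclotomic hn
  have h2 : (Polynomial.X ^ b - 1 : Polynomial ℂ).IsRoot _ := hroot.dvd hmap
  have h3 : (Complex.exp (2 * Real.pi * Complex.I / n)) ^ b = 1 := by
    simpa [Polynomial.IsRoot, sub_eq_zero] using h2
  exact hb ((hζ.pow_eq_one_iff_dvd b).mp h3)

lemma coprime_X {n : ℕ} (hn2 : 2 ≤ n) :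
    IsCoprime (Polynomial.X : Polynomial ℚ) (cyclotomic n ℚ) := by
  rw [Polynomial.irreducible_X.coprime_iff_not_dvd, Polynomial.X_dvd_iff,
    cyclotomic_coeff_zero ℚ hn2]
  norm_num

lemma coprime_pow_sub_one {n b : ℕ} (hn : 0 < n) (hb : ¬ n ∣ b) :
    IsCoprime ((Polynomial.X : Polynomial ℚ) ^ b - 1) (cyclotomic n ℚ) :=
  (((cyclotomic.irreducible_rat hn).coprime_iff_not_dvd).mpr (cyclo_not_dvd hn hb)).symm

lemma one_sub_zpow_rep (z : ℤ) :
    1 - q ^ z = ι (Polynomial.X ^ (-z).toNat - Polynomial.X ^ z.toNat) /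
      ι (Polynomial.X ^ (-z).toNat) := by
  have hg : ι (Polynomial.X ^ (-z).toNat) ≠ 0 :=
    ι_ne_zero (pow_ne_zero _ Polynomial.X_ne_zero)
  rw [zpow_rep z, map_sub, sub_div, div_self hg]

lemma ugood_one_sub_zpow {n : ℕ} (hn2 : 2 ≤ n) (z : ℤ) (hz : ¬ (n : ℤ) ∣ z) :
    UGood (cyclotomic n ℚ) (1 - q ^ z) := by
  have hn : 0 < n := by omega
  refine ⟨Polynomial.X ^ (-z).toNat - Polynomial.X ^ z.toNat, Polynomial.X ^ (-z).toNat,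
    ?_, (coprime_X hn2).pow_left, one_sub_zpow_rep z⟩
  rcases le_or_gt 0 z with hz0 | hz0
  · have h0 : (-z).toNat = 0 := by omega
    have hb : ¬ n ∣ z.toNat := by
      intro h
      apply hz
      have := Int.natCast_dvd_natCast.mpr h
      rwa [Int.toNat_of_nonneg hz0] at this
    rw [h0, pow_zero, show (1 : Polynomial ℚ) - Polynomial.X ^ z.toNat
      = -(Polynomial.X ^ z.toNat - 1) by ring]
    exact (coprime_pow_sub_one hn hb).neg_left
  · have h0 : z.toNat = 0 := by omega
    have hb : ¬ n ∣ (-z).toNat := by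
      intro h
      apply hz
      have := Int.natCast_dvd_natCast.mpr h
      rw [Int.toNat_of_nonneg (by omega : (0:ℤ) ≤ -z)] at this
      exact Int.dvd_neg.mp this
    rw [h0, pow_zero]
    exact coprime_pow_sub_one hn hb

lemma key_cong {n : ℕ} (hn2 : 2 ≤ n) (a : ℤ) :
    modCong (1 - q ^ ((n : ℤ) - a)) (-(q ^ (-a)) * (1 - q ^ a)) (cyclotomic n ℚ) := by
  -- the difference is q^(-a) * (1 - q^n)
  have h1 : q ^ (-a) * q ^ a = 1 := by rw [← zpow_add₀ qne]; norm_num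
  have h2 : q ^ (-a) * q ^ ((n : ℤ)) = q ^ ((n : ℤ) - a) := by
    rw [← zpow_add₀ qne]; ring_nf
  have hdiff : (1 - q ^ ((n : ℤ) - a)) - (-(q ^ (-a)) * (1 - q ^ a))
      = q ^ (-a) * (1 - q ^ ((n : ℤ))) := by
    linear_combination h2 - h1
  obtain ⟨c₀, hc₀⟩ : cyclotomic n ℚ ∣ Polynomial.X ^ n - 1 :=
    cyclotomic.dvd_X_pow_sub_one n ℚ
  have hqn : 1 - q ^ ((n : ℤ)) = ι (cyclotomic n ℚ * (-c₀)) := by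
    rw [mul_neg, ← hc₀, map_neg, map_sub, map_pow, map_one, hqX]
    rw [zpow_natCast]
    ring
  refine ⟨Polynomial.X ^ (-a).toNat * (-c₀), Polynomial.X ^ a.toNat,
    (coprime_X hn2).pow_left, ?_⟩
  rw [hdiff, hqn, zpow_rep (-a), neg_neg]
  rw [div_mul_eq_mul_div, ← map_mul]
  congr 1
  ring

lemma prod_q_zpow (f : ℕ → ℤ) (t : ℕ) :
    ∏ s ∈ Finset.range t, q ^ (f s) = q ^ (∑ s ∈ Finset.range t, f s) := by
  induction t with
  | zero => simp
  | succ t ih => rw [Finset.prod_range_succ, Finset.sum_range_succ, ih, ← zpow_add₀ qne]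

lemma sum_helper (r d : ℤ) (t : ℕ) :
    2 * ∑ s ∈ Finset.range t, (r + d * (s : ℤ)) = t * (2 * r + d * ((t : ℤ) - 1)) := by
  induction t with
  | zero => simp
  | succ t ih =>
    rw [Finset.sum_range_succ]
    push_cast
    push_cast at ih
    linear_combination ih


end St18


/-- modulo `Φ_n(q)`, for `1 ≤ k ≤ (n-r)/d`,
`(q^d;q^d)_{(n-r)/d-k+1} ≡ (-1)^{k-1} q^{(k-1)(dk+2r-2d)/2} (q^d;q^d)_{(n-r)/d}/(q^r;q^d)_{k-1}`. -/


theorem stmt18 (n d : ℕ) (hn : 0 < n) (hd : 0 < d) (hnd : Nat.gcd n d = 1) (r : ℤ)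
    (hr1 : (n : ℤ) + d - n * d ≤ r) (hr2 : r ≤ (n : ℤ))
    (hmod : (n : ℤ) ≡ r [ZMOD (d : ℤ)])
    (k : ℕ) (hk1 : 1 ≤ k) (hk2 : k ≤ (((n : ℤ) - r) / d).toNat) :
    modCong
      (qPoch d d ((((n : ℤ) - r) / d).toNat - k + 1))
      ((-1) ^ (k - 1) * q ^ ((((k : ℤ) - 1) * ((d : ℤ) * k + 2 * r - 2 * d)) / 2) *
        qPoch d d (((n : ℤ) - r) / d).toNat / qPoch r d (k - 1))
      (Polynomial.cyclotomic n ℚ) := by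
  classical
  have hdvd_rn : (d : ℤ) ∣ (n : ℤ) - r := by
    have h := Int.ModEq.dvd hmod
    have h2 := (Int.dvd_neg).mpr h
    simpa using h2
  set m := (((n : ℤ) - r) / (d : ℤ)).toNat with hmdef
  have hm' : (m : ℤ) = ((n : ℤ) - r) / (d : ℤ) :=
    Int.toNat_of_nonneg (Int.ediv_nonneg (by omega) (by positivity))
  have hdm : (d : ℤ) * m = (n : ℤ) - r := by rw [hm']; exact Int.mul_ediv_cancel' hdvd_rn
  have hkm : k ≤ m := hk2
  have hn2 : 2 ≤ n := by
    rcases Nat.lt_or_ge n 2 with h | h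
    · exfalso
      have hn1 : n = 1 := by omega
      subst hn1
      have hr : r = 1 := by push_cast at hr1 hr2; omega
      have hdm0 : (d : ℤ) * m = 0 := by rw [hdm, hr]; norm_num
      have hm0 : (m : ℤ) = 0 := by
        rcases mul_eq_zero.mp hdm0 with h' | h'
        · exfalso; have : (0:ℤ) < d := by exact_mod_cast hd
          omega
        · exact h'
      omega
    · exact h
  set P := Polynomial.cyclotomic n ℚ with hPdef
  have hprime : Prime P := (Polynomial.cyclotomic.irreducible_rat hn).prime
  have hXco : IsCoprime (Polynomial.X : Polynomial ℚ) P := St18.coprime_X hn2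
  set b := k - 1 with hbdef
  set a := m - k + 1 with hadef
  have hab : m = a + b := by omega
  have hbk : (b : ℤ) = (k : ℤ) - 1 := by omega
  -- non-divisibility of the exponents in the denominator
  have hndvd : ∀ s : ℕ, s < b → ¬ (n : ℤ) ∣ (r + (d : ℤ) * s) := by
    intro s hs hdvd
    have hms1 : 1 ≤ m - s := by omega
    have hsm : (((m - s : ℕ)) : ℤ) = (m : ℤ) - s := by omega
    have heq : r + (d : ℤ) * s = (n : ℤ) - (d : ℤ) * ((m - s : ℕ) : ℤ) := by
      rw [hsm]; linear_combination hdm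
    have hdvd2 : (n : ℤ) ∣ (d : ℤ) * ((m - s : ℕ) : ℤ) := by
      have h3 := dvd_sub (dvd_refl (n : ℤ)) hdvd
      rw [heq] at h3
      simpa using h3
    have hdvd3 : n ∣ d * (m - s) := by
      rw [← Nat.cast_mul] at hdvd2; exact_mod_cast hdvd2
    have hndvdms : n ∣ (m - s) :=
      Nat.Coprime.dvd_of_dvd_mul_left hnd hdvd3
    have hbound : (m : ℤ) - s ≤ (n : ℤ) - 1 := by
      have h1 : (0 : ℤ) ≤ (d : ℤ) * s := by positivity
      have h2 : (d : ℤ) * ((m : ℤ) - s) ≤ (d : ℤ) * ((n : ℤ) - 1) := by nlinarith [hdm, hr1, h1]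
      have hd' : (0 : ℤ) < d := by exact_mod_cast hd
      exact le_of_mul_le_mul_left h2 hd'
    have hle := Nat.le_of_dvd (by omega) hndvdms
    omega
  -- Step A: splitting the Pochhammer symbol
  have stepA : qPoch (d : ℤ) (d : ℤ) m = qPoch (d : ℤ) (d : ℤ) a *
      ∏ s ∈ Finset.range b, (1 - q ^ ((n : ℤ) - (r + (d : ℤ) * s))) := by
    unfold qPoch
    rw [← Finset.prod_range_reflect (fun s => 1 - q ^ ((n : ℤ) - (r + (d : ℤ) * s))) b]
    rw [hab, Finset.prod_range_add]
    congr 1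
    apply Finset.prod_congr rfl
    intro j hj
    simp only [Finset.mem_range] at hj
    congr 1
    have h1 : ((a + j : ℕ) : ℤ) = (m : ℤ) - k + 1 + j := by omega
    have h2 : ((b - 1 - j : ℕ) : ℤ) = (k : ℤ) - 2 - j := by omega
    rw [h1, h2]
    congr 1
    linear_combination hdm
  -- the exponent sum
  set S := ∑ s ∈ Finset.range b, (r + (d : ℤ) * s) with hSdef
  have h2S : 2 * S = ((k : ℤ) - 1) * ((d : ℤ) * k + 2 * r - 2 * (d : ℤ)) := by
    rw [hSdef, St18.sum_helper, hbk]
    ring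
  have hES : (((k : ℤ) - 1) * ((d : ℤ) * k + 2 * r - 2 * (d : ℤ))) / 2 = S := by
    rw [← h2S]
    exact Int.mul_ediv_cancel_left S (by norm_num)
  -- Step B
  have stepB : modCong (∏ s ∈ Finset.range b, (1 - q ^ ((n : ℤ) - (r + (d : ℤ) * s))))
      ((-1 : RatFunc ℚ) ^ b * q ^ (-S) * qPoch r (d : ℤ) b) P := by
    have h1 : modCong (∏ s ∈ Finset.range b, (1 - q ^ ((n : ℤ) - (r + (d : ℤ) * s))))
        (∏ s ∈ Finset.range b, (-(q ^ (-(r + (d : ℤ) * s))) * (1 - q ^ (r + (d : ℤ) * s)))) P := by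
      apply St18.modCong_prod hprime
      · intro i _; exact St18.Good.sub hprime St18.Good.one (St18.Good.zpow hXco _)
      · intro i _
        exact ((St18.Good.zpow hXco _).neg).mul
          (St18.Good.sub hprime St18.Good.one (St18.Good.zpow hXco _))
      · intro i _; exact St18.key_cong hn2 _
    have h2 : (∏ s ∈ Finset.range b, (-(q ^ (-(r + (d : ℤ) * s))) * (1 - q ^ (r + (d : ℤ) * s))))
        = (-1 : RatFunc ℚ) ^ b * q ^ (-S) * qPoch r (d : ℤ) b := by
      rw [Finset.prod_mul_distrib]
      congr 1
      · calc ∏ s ∈ Finset.range b, (-(q ^ (-(r + (d : ℤ) * s))))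
            = ∏ s ∈ Finset.range b, ((-1) * q ^ (-(r + (d : ℤ) * s))) := by
              apply Finset.prod_congr rfl; intro s _; ring
          _ = (∏ _s ∈ Finset.range b, (-1 : RatFunc ℚ)) *
              ∏ s ∈ Finset.range b, q ^ (-(r + (d : ℤ) * s)) := Finset.prod_mul_distrib
          _ = (-1 : RatFunc ℚ) ^ b * q ^ (-S) := by
              rw [Finset.prod_const, Finset.card_range, St18.prod_q_zpow]
              have hns : ∑ s ∈ Finset.range b, (-(r + (d : ℤ) * s)) = -S := by
                rw [hSdef, ← Finset.sum_neg_distrib]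
              rw [hns]
    exact St18.modCong_trans hprime h1 (St18.modCong_of_eq h2)
  -- the denominator is a unit mod P
  have hDu : St18.UGood P (qPoch r (d : ℤ) b) := by
    unfold qPoch
    apply St18.UGood.prod
    intro i hi
    simp only [Finset.mem_range] at hi
    exact St18.ugood_one_sub_zpow hn2 _ (hndvd i hi)
  obtain ⟨f, g, hf, hg, hDrep⟩ := hDu
  have hDne : qPoch r (d : ℤ) b ≠ 0 := by
    rw [hDrep]
    exact div_ne_zero (St18.ι_ne_zero (St18.cop_ne_zero hprime hf))
      (St18.ι_ne_zero (St18.cop_ne_zero hprime hg))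
  have hLgood : St18.Good P (qPoch (d : ℤ) (d : ℤ) a) := by
    unfold qPoch
    apply St18.Good.prod
    intro i _
    exact St18.Good.sub hprime St18.Good.one (St18.Good.zpow hXco _)
  -- assemble
  rw [hES]
  apply St18.modCong_cancel hprime f g hf hg hDrep
  have hre : qPoch r (d : ℤ) b * ((-1 : RatFunc ℚ) ^ b * q ^ S * qPoch (d : ℤ) (d : ℤ) m /
      qPoch r (d : ℤ) b) = (-1 : RatFunc ℚ) ^ b * q ^ S * qPoch (d : ℤ) (d : ℤ) m := by
    rw [mul_comm, div_mul_cancel₀ _ hDne]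
  have hugood : St18.Good P ((-1 : RatFunc ℚ) ^ b * q ^ S * qPoch (d : ℤ) (d : ℤ) a) :=
    ((St18.Good.one.neg.pow b).mul (St18.Good.zpow hXco S)).mul hLgood
  have hmm1 : ((-1 : RatFunc ℚ) ^ b) * ((-1 : RatFunc ℚ) ^ b) = 1 := by
    rw [← mul_pow]; norm_num
  have hmm2 : q ^ S * q ^ (-S) = 1 := by rw [← zpow_add₀ St18.qne]; simp
  have e2 : ((-1 : RatFunc ℚ) ^ b * q ^ S * qPoch (d : ℤ) (d : ℤ) a) *
      ((-1 : RatFunc ℚ) ^ b * q ^ (-S) * qPoch r (d : ℤ) b)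
      = qPoch r (d : ℤ) b * qPoch (d : ℤ) (d : ℤ) a := by
    calc ((-1 : RatFunc ℚ) ^ b * q ^ S * qPoch (d : ℤ) (d : ℤ) a) *
        ((-1 : RatFunc ℚ) ^ b * q ^ (-S) * qPoch r (d : ℤ) b)
        = (((-1 : RatFunc ℚ) ^ b * (-1 : RatFunc ℚ) ^ b) * (q ^ S * q ^ (-S))) *
          (qPoch r (d : ℤ) b * qPoch (d : ℤ) (d : ℤ) a) := by ring
      _ = qPoch r (d : ℤ) b * qPoch (d : ℤ) (d : ℤ) a := by rw [hmm1, hmm2]; ring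
  have c1 : modCong (((-1 : RatFunc ℚ) ^ b * q ^ S * qPoch (d : ℤ) (d : ℤ) a) *
      (∏ s ∈ Finset.range b, (1 - q ^ ((n : ℤ) - (r + (d : ℤ) * s)))))
      (((-1 : RatFunc ℚ) ^ b * q ^ S * qPoch (d : ℤ) (d : ℤ) a) *
        ((-1 : RatFunc ℚ) ^ b * q ^ (-S) * qPoch r (d : ℤ) b)) P :=
    St18.modCong_mul_good hugood stepB
  have hchain : modCong ((-1 : RatFunc ℚ) ^ b * q ^ S * qPoch (d : ℤ) (d : ℤ) m)
      (qPoch r (d : ℤ) b * qPoch (d : ℤ) (d : ℤ) a) P := by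
    refine St18.modCong_trans hprime (St18.modCong_of_eq ?_)
      (St18.modCong_trans hprime c1 (St18.modCong_of_eq e2))
    rw [stepA]; ring
  refine St18.modCong_trans hprime (St18.modCong_symm hchain) ?_
  exact St18.modCong_of_eq hre.symm
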